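/- Incompleteness for non-halting (Turing's corollary for formal axiomatic theories): let S be a set of natural numbers that is recursively enumerable (RePred fun n => n ∈ S) — think of S as the set of indices n for which some fixed formal axiomatic theory proves 'the n-th program never halts on input n' — and suppose S is sound, i.e. every n ∈ S really satisfies ¬((Nat.Partrec.Code.ofNat n).eval n).Dom. Then S is incomplete: there exists n with ¬((Nat.Partrec.Code.ofNat n).eval n).Dom and n ∉ S. -/

import Mathlib

/-- Incompleteness for non-halting: any sound r.e. set of indices proved to diverge
on their own index misses some true instance of non-halting. -/
theorem nonhalting_incompleteness (S : Set ℕ)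
    (hre : REPred (fun n => n ∈ S))
    (hsound : ∀ n ∈ S, ¬ ((Denumerable.ofNat Nat.Partrec.Code n).eval n).Dom) :
    ∃ n, ¬ ((Denumerable.ofNat Nat.Partrec.Code n).eval n).Dom ∧ n ∉ S := by
  have hf : Nat.Partrec fun n =>
      (Part.assert (n ∈ S) fun _ => Part.some ()).map fun _ => 0 := by
    have := hre.map ((Computable.const 0).comp Computable.snd).to₂
    exact Partrec.nat_iff.1 this
  obtain ⟨c, hc⟩ := Nat.Partrec.Code.exists_code.1 hf
  set n := Encodable.encode c with hn
  have hdom : ∀ m, (c.eval m).Dom ↔ m ∈ S := by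
    intro m
    rw [hc]
    simp [Part.assert]
  have hofnat : Denumerable.ofNat Nat.Partrec.Code n = c := by
    simp [hn]
  by_cases h : n ∈ S
  · exact absurd ((hdom n).2 h) (hofnat ▸ hsound n h)
  · exact ⟨n, fun hd => h ((hdom n).1 (hofnat ▸ hd)), h⟩
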